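/- Starting from the empty preorder, full meet revision and plain severe revision are interchangeable: for every sequence of formulas P_1,...,P_n, ∅ full(P_1) ... full(P_n) is equivalent to ∅ psev(P_1) ... psev(P_n). -/

import Mathlib

open Set
open scoped Classical

variable {M : Type*}

namespace BeliefRevision

/-- `minSet C P`: the minimal models of `P` according to the total preorder `C`,
i.e. `C(i) ∩ Mod(P)` for the least `i` making this nonempty. -/
noncomputable def minSet : List (Set M) → Set M → Set M
  | [], _ => ∅
  | X :: rest, P => if (X ∩ P).Nonempty then X ∩ P else minSet rest P

/-- Equivalence of total preorders: same minimal models for every formula. -/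
def equivC (C C' : List (Set M)) : Prop :=
  ∀ P : Set M, minSet C P = minSet C' P

/-- A total preorder: an ordered partition (empty classes allowed) of all models. -/
def IsPartition (C : List (Set M)) : Prop :=
  C.Pairwise Disjoint ∧ C.foldr (· ∪ ·) ∅ = Set.univ

/-- Lexicographic revision. -/
def lex (C : List (Set M)) (L : Set M) : List (Set M) :=
  C.map (· ∩ L) ++ C.map (· \ L)

/-- Refinement. -/
def refi (C : List (Set M)) (R : Set M) : List (Set M) :=
  C.flatMap fun X => [X ∩ R, X \ R]

/-- Natural revision: `[C(i)∩P, C(0),...,C(i-1), C(i)\P, C(i+1),...,C(m)]`. -/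
noncomputable def natr : List (Set M) → Set M → List (Set M)
  | [], _ => []
  | X :: rest, P =>
    if (X ∩ P).Nonempty then (X ∩ P) :: (X \ P) :: rest
    else
      match natr rest P with
      | a :: r => a :: X :: r
      | [] => [X]

/-- Severe antiwithdrawal: merge classes `0..i` where `i` is least with `C(i)∩P ≠ ∅`. -/
noncomputable def sevw : List (Set M) → Set M → List (Set M)
  | [], _ => []
  | X :: rest, P =>
    if (X ∩ P).Nonempty then X :: rest
    else
      match sevw rest P with
      | a :: r => (X ∪ a) :: r
      | [] => [X]

/-- Restrained revision. -/
noncomputable def res : List (Set M) → Set M → List (Set M)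
  | [], _ => []
  | X :: rest, P =>
    if (X ∩ P).Nonempty then
      (X ∩ P) :: (X \ P) :: rest.flatMap (fun Y => [Y ∩ P, Y \ P])
    else
      match res rest P with
      | a :: r => a :: (X ∩ P) :: (X \ P) :: r
      | [] => [X ∩ P, X \ P]

/-- Very radical revision. -/
def rad (C : List (Set M)) (P : Set M) : List (Set M) :=
  C.map (· ∩ P) ++ [C.foldr (· ∪ ·) ∅ \ P]

/-- Severe revision: `[C(i)∩P, (C(0)∪...∪C(i))\P, C(i+1),...,C(m)]`. -/
noncomputable def sevr : List (Set M) → Set M → List (Set M)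
  | [], _ => []
  | X :: rest, P =>
    if (X ∩ P).Nonempty then (X ∩ P) :: (X \ P) :: rest
    else
      match sevr rest P with
      | a :: b :: r => a :: (X ∪ b) :: r
      | l => X :: l

/-- Moderate severe revision. -/
noncomputable def msev (C : List (Set M)) (P : Set M) : List (Set M) :=
  C.map (· ∩ P) ++ (sevw C P).map (· \ P)

/-- Merge `A` with the first nonempty class of the list (helper for `psev`). -/
noncomputable def mergeJ (A : Set M) : List (Set M) → List (Set M)
  | [] => [A]
  | Y :: r => if Y.Nonempty then (A ∪ Y) :: r else mergeJ A r

/-- Plain severe revision: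
`[C(i)∩P, C(0)∪...∪(C(i)\P)∪C(j), C(j+1),...,C(m)]` with `i` least with
`C(i)∩P ≠ ∅` and `j` the least index `> i` with `C(j) ≠ ∅`. -/
noncomputable def psev : List (Set M) → Set M → List (Set M)
  | [], _ => []
  | X :: rest, P =>
    if (X ∩ P).Nonempty then (X ∩ P) :: mergeJ (X \ P) rest
    else
      match psev rest P with
      | a :: b :: r => a :: (X ∪ b) :: r
      | l => X :: l

/-- Full meet revision. -/
noncomputable def full (C : List (Set M)) (P : Set M) : List (Set M) :=
  [minSet C P, Set.univ \ minSet C P]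

/-- `maxset F [F₁,...,Fₖ]`: conjoin each `Fᵢ` in order whenever consistent. -/
noncomputable def maxset : Set M → List (Set M) → Set M
  | F, [] => F
  | F, L :: rest => maxset (if (F ∩ L).Nonempty then F ∩ L else F) rest

/-- The underformula `under(S; Lₙ,...,L₁)`. -/
noncomputable def under : Set M → List (Set M) → Set M
  | _, [] => Set.univ
  | S, L :: rest =>
    if (S ∩ L).Nonempty then L ∩ under (S ∩ L) rest else L ∪ under S rest

/-- `upTo C S = C(0) ∪ ... ∪ C(i)` where `i` is least with `C(i)∩S ≠ ∅`. -/
noncomputable def upTo : List (Set M) → Set M → Set M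
  | [], _ => ∅
  | X :: rest, S => if (X ∩ S).Nonempty then X else X ∪ upTo rest S

noncomputable def longestAux : Set M → List (Set M) → Set M
  | A, [] => A
  | A, L :: rest => if (A ∩ L).Nonempty then longestAux (A ∩ L) rest else A

/-- Longest consistent conjunction of a sequence of formulas. -/
noncomputable def longest : List (Set M) → Set M
  | [] => Set.univ
  | L :: rest => longestAux L rest

/-- `rev` is a bottom-refining revision on `(C,P)`: it is a revision
(`min(C rev(P),⊤) = min(C,P)`) and, whenever `C(0)∩Mod(P) ≠ ∅`, class zero of
the result is `C(0)∩Mod(P)` and class one is `C(0)\Mod(P)`. -/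
noncomputable def BottomRefining (rev : List (Set M) → Set M → List (Set M))
    (C : List (Set M)) (P : Set M) : Prop :=
  minSet (rev C P) Set.univ = minSet C P ∧
  ((C.getD 0 ∅ ∩ P).Nonempty →
    (rev C P).getD 0 ∅ = C.getD 0 ∅ ∩ P ∧
    (rev C P).getD 1 ∅ = C.getD 0 ∅ \ P)

/-- Starting from the empty preorder, full meet revision and plain severe
revision are interchangeable. -/
lemma psev_pair_eq_full (A Q : Set M) (hQ : Q.Nonempty) :
    psev [A, Set.univ \ A] Q = full [A, Set.univ \ A] Q := by
  by_cases h1 : (A ∩ Q).Nonempty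
  · have hfull : full [A, Set.univ \ A] Q = [A ∩ Q, Set.univ \ (A ∩ Q)] := by
      simp only [full, minSet, if_pos h1]
    have hpsev : psev [A, Set.univ \ A] Q = (A ∩ Q) :: mergeJ (A \ Q) [Set.univ \ A] := by
      simp only [psev, if_pos h1]
    rw [hfull, hpsev]
    by_cases h2 : (Set.univ \ A).Nonempty
    · have : mergeJ (A \ Q) [Set.univ \ A] = [(A \ Q) ∪ (Set.univ \ A)] := by
        simp only [mergeJ, if_pos h2]
      rw [this]
      have : (A \ Q) ∪ (Set.univ \ A) = Set.univ \ (A ∩ Q) := by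
        ext x
        simp only [Set.mem_union, Set.mem_diff, Set.mem_inter_iff, Set.mem_univ, true_and]
        tauto
      rw [this]
    · have : mergeJ (A \ Q) [Set.univ \ A] = [A \ Q] := by
        simp only [mergeJ, if_neg h2]
      rw [this]
      have hu : ∀ x : M, x ∈ A := by
        intro x
        by_contra hx
        exact h2 ⟨x, trivial, hx⟩
      have : A \ Q = Set.univ \ (A ∩ Q) := by
        ext x
        simp only [Set.mem_diff, Set.mem_inter_iff, Set.mem_univ, true_and]
        have := hu x
        tauto
      rw [this]
  · have h3 : ((Set.univ \ A) ∩ Q).Nonempty := by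
      obtain ⟨q, hq⟩ := hQ
      exact ⟨q, ⟨trivial, fun hA => h1 ⟨q, hA, hq⟩⟩, hq⟩
    have hfull : full [A, Set.univ \ A] Q =
        [(Set.univ \ A) ∩ Q, Set.univ \ ((Set.univ \ A) ∩ Q)] := by
      simp only [full, minSet, if_neg h1, if_pos h3]
    have hpsev : psev [A, Set.univ \ A] Q =
        [(Set.univ \ A) ∩ Q, A ∪ ((Set.univ \ A) \ Q)] := by
      simp only [psev, if_neg h1, if_pos h3, mergeJ]
    rw [hfull, hpsev]
    have : A ∪ ((Set.univ \ A) \ Q) = Set.univ \ ((Set.univ \ A) ∩ Q) := by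
      ext x
      simp only [Set.mem_union, Set.mem_diff, Set.mem_inter_iff, Set.mem_univ, true_and]
      tauto
    rw [this]

lemma full_pair (A Q : Set M) :
    full [A, Set.univ \ A] Q =
      [minSet [A, Set.univ \ A] Q, Set.univ \ minSet [A, Set.univ \ A] Q] := rfl

lemma fold_full_eq_psev (Ps : List (Set M)) (h : ∀ P ∈ Ps, P.Nonempty) :
    ∀ A : Set M, Ps.foldl full [A, Set.univ \ A] = Ps.foldl psev [A, Set.univ \ A] := by
  induction Ps with
  | nil => intro A; rfl
  | cons Q Ps ih =>
    intro A
    have hQ : Q.Nonempty := h Q List.mem_cons_self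
    simp only [List.foldl_cons]
    rw [psev_pair_eq_full A Q hQ, full_pair]
    exact ih (fun P hP => h P (List.mem_cons_of_mem _ hP)) _
theorem full_eq_psev_from_empty (Ps : List (Set M)) (h : ∀ P ∈ Ps, P.Nonempty) :
    equivC (Ps.foldl full [Set.univ]) (Ps.foldl psev [Set.univ]) := by
  cases Ps with
  | nil => intro P; rfl
  | cons P Ps =>
    have hP : P.Nonempty := h P List.mem_cons_self
    have hP' : ((Set.univ : Set M) ∩ P).Nonempty := by rwa [Set.univ_inter]
    have h1 : full [(Set.univ : Set M)] P = [P, Set.univ \ P] := by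
      simp only [full, minSet, Set.univ_inter, if_pos hP]
    have h2 : psev [(Set.univ : Set M)] P = [P, Set.univ \ P] := by
      simp only [psev, mergeJ, Set.univ_inter, if_pos hP]
    simp only [List.foldl_cons, h1, h2]
    rw [fold_full_eq_psev Ps (fun Q hQ => h Q (List.mem_cons_of_mem _ hQ)) P]
    intro X; rfl

end BeliefRevision
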